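/- For a positive definite matrix A, the second derivative of Φ₃(A,X) = tr(A+X) − 2 tr(A # X) with respect to X, evaluated at X = A, satisfies D²Φ₃(A,X)|_{X=A}(Y,Y) = (1/2) tr(Y A^{-1} Y) for every Hermitian Y; in particular it is nonnegative, and positive when Y ≠ 0. -/

import Mathlib

open scoped ComplexOrder
open MeasureTheory

/-- The positive semidefinite square root of a matrix (zero if not positive semidefinite). -/
noncomputable def msqrt {N : ℕ} (A : Matrix (Fin N) (Fin N) ℂ) : Matrix (Fin N) (Fin N) ℂ :=
  by classical exact if h : A.PosSemidef then
    ((h.1.eigenvectorUnitary : Matrix (Fin N) (Fin N) ℂ) *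
      Matrix.diagonal ((RCLike.ofReal : ℝ → ℂ) ∘ Real.sqrt ∘ h.1.eigenvalues) *
      (star (h.1.eigenvectorUnitary : Matrix (Fin N) (Fin N) ℂ))) else 0

/-- The Pusz–Woronowicz geometric mean `A # B = A^{1/2} (A^{-1/2} B A^{-1/2})^{1/2} A^{1/2}`. -/
noncomputable def geom {N : ℕ} (A B : Matrix (Fin N) (Fin N) ℂ) : Matrix (Fin N) (Fin N) ℂ :=
  msqrt A * msqrt ((msqrt A)⁻¹ * B * (msqrt A)⁻¹) * msqrt A

/-- The logarithm of a Hermitian matrix, via the spectral theorem (zero if not Hermitian). -/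
noncomputable def mlog {N : ℕ} (A : Matrix (Fin N) (Fin N) ℂ) : Matrix (Fin N) (Fin N) ℂ :=
  by classical exact if h : A.IsHermitian then h.cfc Real.log else 0

/-- The log Euclidean mean `exp((log A + log B)/2)`. -/
noncomputable def logEuclid {N : ℕ} (A B : Matrix (Fin N) (Fin N) ℂ) : Matrix (Fin N) (Fin N) ℂ :=
  NormedSpace.exp ((2:ℂ)⁻¹ • (mlog A + mlog B))

open Filter Matrix
open scoped MatrixOrder

lemma msqrt_form {N : ℕ} (A : Matrix (Fin N) (Fin N) ℂ) (h : A.PosSemidef) :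
    ((h.1.eigenvectorUnitary : Matrix (Fin N) (Fin N) ℂ) *
      Matrix.diagonal ((RCLike.ofReal : ℝ → ℂ) ∘ Real.sqrt ∘ h.1.eigenvalues) *
      (star (h.1.eigenvectorUnitary : Matrix (Fin N) (Fin N) ℂ))) = CFC.sqrt A := by
  rw [CFC.sqrt_eq_cfc, cfc_nnreal_eq_real _ A, h.1.cfc_eq]
  simp only [IsHermitian.cfc, Unitary.conjStarAlgAut_apply]
  congr 3
  funext i
  simp [Real.coe_sqrt, Real.coe_toNNReal', h.eigenvalues_nonneg i]

lemma msqrt_eq {N : ℕ} (A : Matrix (Fin N) (Fin N) ℂ) (h : A.PosSemidef) :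
    msqrt A = CFC.sqrt A := by
  unfold msqrt
  rw [dif_pos h, msqrt_form A h]

lemma sqrt1_hasDerivAt (μ t : ℝ) (h : 0 < 1 + t * μ) :
    HasDerivAt (fun s : ℝ => Real.sqrt (1 + s * μ)) (μ / (2 * Real.sqrt (1 + t * μ))) t := by
  have h1 : HasDerivAt (fun s : ℝ => 1 + s * μ) μ t := by
    simpa using ((hasDerivAt_id t).mul_const μ).const_add 1
  have h2 := (Real.hasDerivAt_sqrt h.ne').comp t h1
  refine h2.congr_deriv ?_
  ring

lemma sqrt2_hasDerivAt (μ : ℝ) :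
    HasDerivAt (fun s : ℝ => μ / (2 * Real.sqrt (1 + s * μ))) (-(μ ^ 2) / 4) 0 := by
  have hg : HasDerivAt (fun s : ℝ => 2 * Real.sqrt (1 + s * μ)) (2 * (μ / (2 * Real.sqrt (1 + 0 * μ)))) 0 :=
    (sqrt1_hasDerivAt μ 0 (by norm_num)).const_mul 2
  have h0 : (2 : ℝ) * Real.sqrt (1 + 0 * μ) ≠ 0 := by norm_num [Real.sqrt_one]
  have h3 := (hasDerivAt_const (0:ℝ) μ).div hg h0
  refine h3.congr_deriv ?_
  norm_num [Real.sqrt_one]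
  ring

lemma iteratedDeriv_two_aux {N : ℕ} (a b : ℂ) (c : Fin N → ℂ) (μ : Fin N → ℝ) :
    iteratedDeriv 2
      (fun t : ℝ => a + (t : ℂ) * b - 2 * ∑ i, c i * (Real.sqrt (1 + t * μ i) : ℂ)) 0
      = (2:ℂ)⁻¹ * ∑ i, c i * ((μ i ^ 2 : ℝ) : ℂ) := by
  set F : ℝ → ℂ := fun t => a + (t : ℂ) * b - 2 * ∑ i, c i * (Real.sqrt (1 + t * μ i) : ℂ)
  set F1 : ℝ → ℂ := fun t => b - 2 * ∑ i, c i * ((μ i / (2 * Real.sqrt (1 + t * μ i)) : ℝ) : ℂ)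
  have h1 : ∀ᶠ t in nhds (0:ℝ), ∀ i, 0 < 1 + t * μ i := by
    rw [eventually_all]
    intro i
    have hc : Continuous fun t : ℝ => 1 + t * μ i := by continuity
    exact (hc.tendsto 0).eventually
      (eventually_gt_nhds (show (0:ℝ) < 1 + 0 * μ i by norm_num))
  have hF : ∀ t : ℝ, (∀ i, 0 < 1 + t * μ i) → HasDerivAt F (F1 t) t := by
    intro t ht
    have hlin : HasDerivAt (fun s : ℝ => a + (s : ℂ) * b) b t := by
      simpa using (((hasDerivAt_id t).ofReal_comp).mul_const b).const_add a
    have hsum : HasDerivAt (fun s : ℝ => ∑ i, c i * (Real.sqrt (1 + s * μ i) : ℂ))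
        (∑ i, c i * ((μ i / (2 * Real.sqrt (1 + t * μ i)) : ℝ) : ℂ)) t := by
      refine HasDerivAt.fun_sum fun i _ => ?_
      exact ((sqrt1_hasDerivAt (μ i) t (ht i)).ofReal_comp).const_mul (c i)
    exact hlin.sub (hsum.const_mul 2)
  have hD : deriv F =ᶠ[nhds (0:ℝ)] F1 := h1.mono fun t ht => (hF t ht).deriv
  have hF1 : HasDerivAt F1 (-(2 * ∑ i, c i * ((-(μ i ^ 2) / 4 : ℝ) : ℂ))) 0 := by
    have hsum : HasDerivAt (fun s : ℝ => ∑ i, c i * ((μ i / (2 * Real.sqrt (1 + s * μ i)) : ℝ) : ℂ))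
        (∑ i, c i * ((-(μ i ^ 2) / 4 : ℝ) : ℂ)) 0 := by
      refine HasDerivAt.fun_sum fun i _ => ?_
      exact ((sqrt2_hasDerivAt (μ i)).ofReal_comp).const_mul (c i)
    exact ((hasDerivAt_const (0:ℝ) b).sub (hsum.const_mul 2)).congr_deriv (zero_sub _)
  have : iteratedDeriv 2 F 0 = deriv (deriv F) 0 := by
    simp [iteratedDeriv_succ, iteratedDeriv_one]
  rw [this, hD.deriv_eq, hF1.deriv, Finset.mul_sum, Finset.mul_sum]
  rw [← Finset.sum_neg_distrib]
  refine Finset.sum_congr rfl fun i _ => ?_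
  push_cast
  ring

/-- The second derivative of `Φ₃(A,X) = tr(A+X) - 2 tr(A # X)` in `X` at `X = A` in direction a
Hermitian `Y` is `(1/2) tr(Y A⁻¹ Y)`; it is nonnegative, and positive when `Y ≠ 0`. -/
theorem stmt11 {N : ℕ} (A : Matrix (Fin N) (Fin N) ℂ) (hA : A.PosDef)
    (Y : Matrix (Fin N) (Fin N) ℂ) (hY : Y.IsHermitian) :
    iteratedDeriv 2
        (fun t : ℝ => (A + (A + t • Y)).trace - 2 * (geom A (A + t • Y)).trace) 0
      = (2:ℂ)⁻¹ * (Y * A⁻¹ * Y).trace ∧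
    0 ≤ (2:ℂ)⁻¹ * (Y * A⁻¹ * Y).trace ∧
    (Y ≠ 0 → 0 < (2:ℂ)⁻¹ * (Y * A⁻¹ * Y).trace) := by
  classical
  have hAps := hA.posSemidef
  obtain ⟨S, hSdef⟩ : ∃ S, S = CFC.sqrt A := ⟨_, rfl⟩
  have hmsA : msqrt A = S := by unfold msqrt; rw [dif_pos hAps, msqrt_form A hAps, hSdef]
  have hS2 : S * S = A := by rw [hSdef]; exact CFC.sqrt_mul_sqrt_self A hAps.nonneg
  have hSH : S.IsHermitian := by rw [hSdef]; exact (CFC.sqrt_nonneg A).posSemidef.isHermitian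
  have hdetS : IsUnit S.det := by
    refine isUnit_iff_ne_zero.mpr fun h => ?_
    have : A.det = 0 := by rw [← hS2, det_mul, h, mul_zero]
    exact hA.det_pos.ne' this
  have hSiS : S⁻¹ * S = 1 := nonsing_inv_mul _ hdetS
  have hSSi : S * S⁻¹ = 1 := mul_nonsing_inv _ hdetS
  obtain ⟨M, hMdef⟩ : ∃ M, M = S⁻¹ * Y * S⁻¹ := ⟨_, rfl⟩
  have hMH : M.IsHermitian := by
    have hSi : S⁻¹ᴴ = S⁻¹ := by rw [conjTranspose_nonsing_inv, hSH.eq]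
    simp only [Matrix.IsHermitian, hMdef, conjTranspose_mul, hSi, hY.eq, Matrix.mul_assoc]
  obtain ⟨U, hUdef⟩ : ∃ U, U = (hMH.eigenvectorUnitary : Matrix (Fin N) (Fin N) ℂ) := ⟨_, rfl⟩
  obtain ⟨μ, hμdef⟩ : ∃ μ, μ = hMH.eigenvalues := ⟨_, rfl⟩
  have hUU : U * star U = 1 := by
    rw [hUdef]; exact (Matrix.mem_unitaryGroup_iff).mp (hMH.eigenvectorUnitary).2
  have hUU' : star U * U = 1 := by
    rw [hUdef]; exact (Matrix.mem_unitaryGroup_iff').mp (hMH.eigenvectorUnitary).2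
  have hspec : M = U * diagonal (RCLike.ofReal ∘ μ) * star U := by
    rw [hUdef, hμdef]; exact hMH.spectral_theorem
  obtain ⟨c, hcdef⟩ : ∃ c : Fin N → ℂ, c = fun i => (star U * A * U) i i := ⟨_, rfl⟩
  have htr : ∀ d : Fin N → ℂ, (S * (U * diagonal d * star U) * S).trace = ∑ i, c i * d i := by
    intro d
    have e1 : (S * (U * diagonal d * star U) * S).trace
        = ((star U * A * U) * diagonal d).trace := by
      rw [trace_mul_cycle, ← Matrix.mul_assoc, hS2, trace_mul_cycle]
      simp only [Matrix.mul_assoc]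
    rw [e1, Matrix.trace]
    refine Finset.sum_congr rfl fun i _ => ?_
    simp [Matrix.diag, Matrix.mul_diagonal, hcdef]
  have hconj : ∀ d e : Fin N → ℂ, (U * diagonal d * star U) * (U * diagonal e * star U)
      = U * diagonal (fun i => d i * e i) * star U := by
    intro d e
    simp only [Matrix.mul_assoc]
    rw [← Matrix.mul_assoc (star U) U, hUU', Matrix.one_mul,
      ← Matrix.mul_assoc (diagonal d), diagonal_mul_diagonal]
  have hmain : ∀ t : ℝ, (∀ i, 0 < 1 + t * μ i) →
      (geom A (A + t • Y)).trace = ∑ i, c i * ((Real.sqrt (1 + t * μ i) : ℝ) : ℂ) := by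
    intro t ht
    set d : Fin N → ℂ := fun i => ((1 + t * μ i : ℝ) : ℂ) with hddef
    set sd : Fin N → ℂ := fun i => ((Real.sqrt (1 + t * μ i) : ℝ) : ℂ) with hsddef
    have eA : S⁻¹ * A * S⁻¹ = 1 := by
      rw [← hS2, ← Matrix.mul_assoc, Matrix.mul_assoc, hSSi, Matrix.mul_one, hSiS]
    have hid : S⁻¹ * (A + t • Y) * S⁻¹ = U * diagonal d * star U := by
      have e1 : S⁻¹ * (A + t • Y) * S⁻¹ = 1 + t • M := by
        rw [Matrix.mul_add, Matrix.add_mul, eA, Matrix.mul_smul, Matrix.smul_mul, hMdef]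
      have e2 : diagonal d = 1 + t • diagonal (RCLike.ofReal ∘ μ) := by
        have hd' : d = (fun _ => (1:ℂ)) + t • (RCLike.ofReal ∘ μ) := by
          funext i
          show ((1 + t * μ i : ℝ) : ℂ) = 1 + t • ((μ i : ℝ) : ℂ)
          rw [Complex.real_smul]
          push_cast
          ring
        rw [hd', ← Matrix.diagonal_one, ← Matrix.diagonal_smul, Matrix.diagonal_add]
        rfl
      rw [e1, e2, hspec, Matrix.mul_add, Matrix.add_mul, Matrix.mul_one, hUU,
        Matrix.mul_smul, Matrix.smul_mul]
    have hdnn : ∀ i, (0:ℂ) ≤ d i := fun i => Complex.zero_le_real.mpr (ht i).le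
    have hP : (U * diagonal d * star U).PosSemidef := by
      simpa [Matrix.star_eq_conjTranspose] using
        (posSemidef_diagonal_iff.mpr hdnn).mul_mul_conjTranspose_same U
    have hBps : (U * diagonal sd * star U).PosSemidef := by
      simpa [Matrix.star_eq_conjTranspose] using
        (posSemidef_diagonal_iff.mpr fun i =>
          Complex.zero_le_real.mpr (Real.sqrt_nonneg _)).mul_mul_conjTranspose_same U
    have hB2 : (U * diagonal sd * star U) ^ 2 = U * diagonal d * star U := by
      have hsq : (fun i => sd i * sd i) = d := by
        funext i
        show ((Real.sqrt (1 + t * μ i) : ℝ) : ℂ) * _ = _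
        rw [← Complex.ofReal_mul, Real.mul_self_sqrt (ht i).le]
      rw [pow_two, hconj, hsq]
    have hms : msqrt (U * diagonal d * star U) = U * diagonal sd * star U := by
      unfold msqrt
      rw [dif_pos hP]
      rw [msqrt_form _ hP]
      exact CFC.sqrt_unique (by rw [← sq]; exact hB2) hBps.nonneg
    have hgeom : geom A (A + t • Y) = S * (U * diagonal sd * star U) * S := by
      unfold geom
      rw [hmsA, hid, hms]
    rw [hgeom, htr]
  have hUunit : IsUnit U := ⟨⟨U, star U, hUU, hUU'⟩, rfl⟩
  have hcol : ∀ i, (fun j => U j i) ≠ 0 := by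
    intro i h
    have hone : (star U * U) i i = 1 := by rw [hUU']; simp
    rw [Matrix.mul_apply] at hone
    have : ∀ j, (star U) i j * U j i = 0 := by
      intro j
      have : U j i = 0 := congrFun h j
      simp [this]
    simp only [this, Finset.sum_const_zero] at hone
    exact one_ne_zero hone.symm
  have hco : ∀ i, c i = star (fun j => U j i) ⬝ᵥ A.mulVec (fun j => U j i) := by
    intro i
    rw [hcdef]
    simp only [Matrix.mul_apply, dotProduct, Matrix.mulVec, Pi.star_apply, Matrix.star_apply,
      Finset.mul_sum, Finset.sum_mul]
    rw [Finset.sum_comm]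
    exact Finset.sum_congr rfl fun j _ => Finset.sum_congr rfl fun k _ => by ring
  have hcpos : ∀ i, 0 < c i := fun i => (hco i) ▸ hA.dotProduct_mulVec_pos (hcol i)
  have hMM : M * M = U * diagonal (fun i => ((μ i ^ 2 : ℝ) : ℂ)) * star U := by
    have e : (fun i => (RCLike.ofReal ∘ μ) i * (RCLike.ofReal ∘ μ) i)
        = fun i => ((μ i ^ 2 : ℝ) : ℂ) := by
      funext i
      show ((μ i : ℝ) : ℂ) * ((μ i : ℝ) : ℂ) = _
      push_cast
      ring
    rw [hspec, hconj, e]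
  have hYS : Y = S * M * S := by
    rw [hMdef]
    rw [Matrix.mul_assoc, Matrix.mul_assoc, Matrix.mul_assoc, hSiS, Matrix.mul_one,
      ← Matrix.mul_assoc, hSSi, Matrix.one_mul]
  have hSMMS : S * (M * M) * S = Y * A⁻¹ * Y := by
    have hAinv : A⁻¹ = S⁻¹ * S⁻¹ := by rw [← hS2, Matrix.mul_inv_rev]
    rw [hMdef, hAinv]
    simp only [Matrix.mul_assoc]
    rw [← Matrix.mul_assoc S S⁻¹, hSSi, Matrix.one_mul, hSiS]
    simp only [Matrix.mul_one, Matrix.mul_assoc]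
  have htrY : (Y * A⁻¹ * Y).trace = ∑ i, c i * ((μ i ^ 2 : ℝ) : ℂ) := by
    rw [← hSMMS, hMM, htr]
  have hY0 : (∀ i, μ i = 0) → Y = 0 := by
    intro h
    have hμ0 : (RCLike.ofReal ∘ μ : Fin N → ℂ) = 0 := funext fun i => by simp [h i]
    have hM0 : M = 0 := by
      have : diagonal (0 : Fin N → ℂ) = 0 := by
        ext i j
        by_cases h' : i = j <;> simp [Matrix.diagonal_apply, h']
      rw [hspec, hμ0, this, Matrix.mul_zero, Matrix.zero_mul]
    rw [hYS, hM0, Matrix.mul_zero, Matrix.zero_mul]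

  -- eventual neighborhood where all eigen-shifts are positive
  have h1 : ∀ᶠ t in nhds (0:ℝ), ∀ i, 0 < 1 + t * μ i := by
    rw [Filter.eventually_all]
    intro i
    have hc : Continuous fun t : ℝ => 1 + t * μ i :=
      continuous_const.add (continuous_id.mul continuous_const)
    exact (hc.tendsto 0).eventually
      (eventually_gt_nhds (show (0:ℝ) < 1 + 0 * μ i by norm_num))
  have hEq : (fun t : ℝ => (A + (A + t • Y)).trace - 2 * (geom A (A + t • Y)).trace)
      =ᶠ[nhds (0:ℝ)] fun t : ℝ => (A.trace + A.trace) + (t : ℂ) * Y.trace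
        - 2 * ∑ i, c i * ((Real.sqrt (1 + t * μ i) : ℝ) : ℂ) := by
    refine h1.mono fun t ht => ?_
    show (A + (A + t • Y)).trace - 2 * (geom A (A + t • Y)).trace = _
    rw [hmain t ht]
    simp [Matrix.trace_add, Matrix.trace_smul, Complex.real_smul]
    ring
  have hID : iteratedDeriv 2
      (fun t : ℝ => (A + (A + t • Y)).trace - 2 * (geom A (A + t • Y)).trace) 0
      = (2:ℂ)⁻¹ * ∑ i, c i * ((μ i ^ 2 : ℝ) : ℂ) := by
    have h2 : iteratedDeriv 2
        (fun t : ℝ => (A + (A + t • Y)).trace - 2 * (geom A (A + t • Y)).trace) 0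
        = iteratedDeriv 2 (fun t : ℝ => (A.trace + A.trace) + (t : ℂ) * Y.trace
            - 2 * ∑ i, c i * ((Real.sqrt (1 + t * μ i) : ℝ) : ℂ)) 0 := by
      simp only [iteratedDeriv_succ, iteratedDeriv_one]
      exact (hEq.deriv).deriv_eq
    rw [h2, iteratedDeriv_two_aux]
  -- real form of the trace
  have hcre : ∀ i, c i = (((c i).re : ℝ) : ℂ) := by
    intro i
    have him : (c i).im = 0 := ((Complex.lt_def.mp (hcpos i)).2).symm
    exact Complex.ext rfl (by simp [him])
  have hrpos : ∀ i, 0 < (c i).re := fun i => by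
    simpa using (Complex.lt_def.mp (hcpos i)).1
  have htrR : (Y * A⁻¹ * Y).trace = ((∑ i, (c i).re * μ i ^ 2 : ℝ) : ℂ) := by
    have hterm : ∀ i, c i * ((μ i ^ 2 : ℝ) : ℂ) = (((c i).re * μ i ^ 2 : ℝ) : ℂ) := by
      intro i
      rw [hcre i]
      push_cast [Complex.ofReal_re]
      ring
    rw [htrY, Finset.sum_congr rfl fun i _ => hterm i]
    norm_cast
  have hsumnn : 0 ≤ ∑ i, (c i).re * μ i ^ 2 :=
    Finset.sum_nonneg fun i _ => mul_nonneg (hrpos i).le (sq_nonneg _)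
  refine ⟨?_, ?_, ?_⟩
  · rw [hID, htrY]
  · rw [htrR, show ((2:ℂ)⁻¹ * ((∑ i, (c i).re * μ i ^ 2 : ℝ) : ℂ))
        = (((2⁻¹ * ∑ i, (c i).re * μ i ^ 2 : ℝ)) : ℂ) by push_cast; ring]
    rw [Complex.zero_le_real]
    linarith
  · intro hYne
    obtain ⟨i0, hi0⟩ : ∃ i, μ i ≠ 0 := by
      by_contra h
      push_neg at h
      exact hYne (hY0 h)
    rw [htrR, show ((2:ℂ)⁻¹ * ((∑ i, (c i).re * μ i ^ 2 : ℝ) : ℂ))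
        = (((2⁻¹ * ∑ i, (c i).re * μ i ^ 2 : ℝ)) : ℂ) by push_cast; ring]
    rw [Complex.zero_lt_real]
    have hsum : 0 < ∑ i, (c i).re * μ i ^ 2 := by
      refine Finset.sum_pos' (fun i _ => mul_nonneg (hrpos i).le (sq_nonneg _))
        ⟨i0, Finset.mem_univ _, ?_⟩
      exact mul_pos (hrpos i0)
        (lt_of_le_of_ne (sq_nonneg _) (Ne.symm (pow_ne_zero 2 hi0)))
    linarith
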